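/- Let p be an odd prime, e ≥ 1, a ∈ p·Z/p^e Z with a ≠ 0, b a unit, and x̃ a fixed point of φ (φ(x̃) = x̃, with x̃ a unit). Then for every x ∈ Z/p^e Z, v_p(φ(x) - x̃) = min(v_p(a) + v_p(x - x̃), e), where v_p denotes the (truncated) p-adic valuation v_p(y) = min(max{k : p^k | y}, e). -/

import Mathlib

open scoped Classical

def vp (p e : ℕ) (y : ZMod (p ^ e)) : ℕ :=
  if y = 0 then e else min (padicValNat p y.val) e

section Aux
variable (p e : ℕ) (hp : p.Prime) (he : 1 ≤ e)

lemma vp_le (y : ZMod (p ^ e)) : vp p e y ≤ e := by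
  unfold vp; split <;> simp

include hp he

lemma isUnit_iff' (y : ZMod (p ^ e)) : IsUnit y ↔ ¬ p ∣ y.val := by
  haveI : NeZero (p ^ e) := ⟨pow_ne_zero _ hp.pos.ne'⟩
  rw [show y = ((y.val : ℕ) : ZMod (p ^ e)) from by rw [ZMod.natCast_val, ZMod.cast_id],
    ZMod.isUnit_iff_coprime, Nat.coprime_pow_right_iff (by omega), Nat.coprime_comm,
    hp.coprime_iff_not_dvd, ZMod.val_natCast_of_lt (ZMod.val_lt y)]

omit he in
lemma vp_lt (y : ZMod (p ^ e)) (hy : y ≠ 0) : padicValNat p y.val < e := by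
  haveI : NeZero (p ^ e) := ⟨pow_ne_zero _ hp.pos.ne'⟩
  haveI : Fact p.Prime := ⟨hp⟩
  by_contra h
  push_neg at h
  have hval : y.val ≠ 0 := fun h0 => hy ((ZMod.val_eq_zero y).1 h0)
  have : p ^ e ∣ y.val := (padicValNat_dvd_iff_le hval).2 h
  exact absurd (Nat.le_of_dvd (Nat.pos_of_ne_zero hval) this) (not_le.2 (ZMod.val_lt y))

omit he in
lemma vp_mul (y z : ZMod (p ^ e)) :
    vp p e (y * z) = min (vp p e y + vp p e z) e := by
  haveI : NeZero (p ^ e) := ⟨pow_ne_zero _ hp.pos.ne'⟩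
  haveI : Fact p.Prime := ⟨hp⟩
  rcases eq_or_ne y 0 with rfl | hy
  · simp [vp]
  rcases eq_or_ne z 0 with rfl | hz
  · simp [vp]
  have hyv : y.val ≠ 0 := fun h0 => hy ((ZMod.val_eq_zero y).1 h0)
  have hzv : z.val ≠ 0 := fun h0 => hz ((ZMod.val_eq_zero z).1 h0)
  have hylt := vp_lt p e hp y hy
  have hzlt := vp_lt p e hp z hz
  have hBv : y.val * z.val ≠ 0 := Nat.mul_ne_zero hyv hzv
  have hB : padicValNat p (y.val * z.val) = padicValNat p y.val + padicValNat p z.val :=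
    padicValNat.mul hyv hzv
  have hA : (y * z).val = y.val * z.val % p ^ e := ZMod.val_mul y z
  rcases eq_or_ne (y * z) 0 with h0 | h0
  · have hmod : y.val * z.val % p ^ e = 0 := by rw [← hA, (ZMod.val_eq_zero _).2 h0]
    have hle : e ≤ padicValNat p (y.val * z.val) :=
      (padicValNat_dvd_iff_le hBv).1 (Nat.dvd_of_mod_eq_zero hmod)
    simp only [vp, if_pos h0, if_neg hy, if_neg hz]
    omega
  · have hAv : (y * z).val ≠ 0 := fun h => h0 ((ZMod.val_eq_zero _).1 h)
    have hlt : padicValNat p (y.val * z.val) < e := by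
      by_contra h
      push_neg at h
      have hd : p ^ e ∣ y.val * z.val := (padicValNat_dvd_iff_le hBv).2 h
      exact hAv (by rw [hA]; omega)
    have hAlt := vp_lt p e hp (y * z) h0
    have h1 : padicValNat p (y.val * z.val) ≤ padicValNat p (y * z).val := by
      refine (padicValNat_dvd_iff_le hAv).1 ?_
      rw [hA, Nat.dvd_mod_iff (pow_dvd_pow p hlt.le)]
      exact pow_padicValNat_dvd
    have h2 : padicValNat p (y * z).val ≤ padicValNat p (y.val * z.val) := by
      refine (padicValNat_dvd_iff_le hBv).1 ?_
      rw [← Nat.dvd_mod_iff (pow_dvd_pow p hAlt.le), ← hA]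
      exact pow_padicValNat_dvd
    simp only [vp, if_neg h0, if_neg hy, if_neg hz]
    omega

lemma vp_unit_eq_zero (u : ZMod (p ^ e)) (hu : IsUnit u) : vp p e u = 0 := by
  have hune : u ≠ 0 := by
    haveI : Fact (1 < p ^ e) := ⟨Nat.one_lt_pow (by omega) hp.one_lt⟩
    exact hu.ne_zero
  simp only [vp, if_neg hune]
  rw [padicValNat.eq_zero_of_not_dvd ((isUnit_iff' p e hp he u).1 hu)]
  simp

lemma vp_unit_mul (u y : ZMod (p ^ e)) (hu : IsUnit u) :
    vp p e (u * y) = vp p e y := by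
  rw [vp_mul p e hp, vp_unit_eq_zero p e hp he u hu, zero_add, min_eq_left (vp_le p e y)]

end Aux

theorem stmt11 (p : ℕ) (hp : p.Prime) (hp2 : p ≠ 2) (e : ℕ) (he : 1 ≤ e)
    (a b : ZMod (p ^ e)) (hpa : (p : ZMod (p ^ e)) ∣ a) (ha : a ≠ 0)
    (hb : IsUnit b)
    (φ : ZMod (p ^ e) → ZMod (p ^ e))
    (hφ : ∀ x, φ x = if IsUnit x then a * x⁻¹ + b else b)
    (xt : ZMod (p ^ e)) (hxt : IsUnit xt) (hfix : φ xt = xt) :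
    ∀ x : ZMod (p ^ e),
      vp p e (φ x - xt) = min (vp p e a + vp p e (x - xt)) e := by
  intro x
  haveI : NeZero (p ^ e) := ⟨pow_ne_zero _ hp.pos.ne'⟩
  haveI : Fact p.Prime := ⟨hp⟩
  have hbeq : a * xt⁻¹ + b = xt := by
    have h := hφ xt
    rw [hfix, if_pos hxt] at h
    exact h.symm
  have hxtinv : xt * xt⁻¹ = 1 := ZMod.mul_inv_of_unit xt hxt
  have hxtinvu : IsUnit xt⁻¹ := IsUnit.of_mul_eq_one xt (by rw [mul_comm]; exact hxtinv)
  by_cases hx : IsUnit x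
  · have hxinv : x * x⁻¹ = 1 := ZMod.mul_inv_of_unit x hx
    have hxinvu : IsUnit x⁻¹ := IsUnit.of_mul_eq_one x (by rw [mul_comm]; exact hxinv)
    have key : φ x - xt = (x⁻¹ * xt⁻¹) * (a * (xt - x)) := by
      rw [hφ x, if_pos hx]
      linear_combination hbeq + (a * xt⁻¹) * hxinv - (a * x⁻¹) * hxtinv
    have hneg : xt - x = (-1) * (x - xt) := by ring
    rw [key, vp_unit_mul p e hp he _ _ (hxinvu.mul hxtinvu), vp_mul p e hp, hneg,
      vp_unit_mul p e hp he _ _ (isUnit_one.neg)]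
  · have key : φ x - xt = (-xt⁻¹) * a := by
      rw [hφ x, if_neg hx]
      linear_combination hbeq
    have hu : IsUnit (x - xt) := by
      rw [isUnit_iff' p e hp he]
      have hpx : p ∣ x.val := by
        have := (isUnit_iff' p e hp he x).not_left.1 hx
        simpa using this
      have hpxt : ¬ p ∣ xt.val := (isUnit_iff' p e hp he xt).1 hxt
      intro hd
      -- cast to ZMod p
      set f : ZMod (p ^ e) →+* ZMod p := ZMod.castHom (dvd_pow_self p (by omega)) (ZMod p)
      have hf : ∀ y : ZMod (p ^ e), f y = ((y.val : ℕ) : ZMod p) := by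
        intro y
        rw [ZMod.natCast_val, ZMod.castHom_apply]
      have hdvd_iff : ∀ y : ZMod (p ^ e), p ∣ y.val ↔ f y = 0 := by
        intro y
        rw [hf, ZMod.natCast_eq_zero_iff]
      have h1 : f x = 0 := (hdvd_iff x).1 hpx
      have h2 : f (x - xt) = 0 := (hdvd_iff _).1 hd
      have : f xt = 0 := by
        have h3 := map_sub f x xt
        rw [h2, h1, zero_sub] at h3
        exact neg_eq_zero.mp h3.symm
      exact hpxt ((hdvd_iff xt).2 this)
    rw [key, vp_unit_mul p e hp he _ _ hxtinvu.neg, vp_unit_eq_zero p e hp he _ hu, add_zero,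
      min_eq_left (vp_le p e a)]
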